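/- Let S = (ψ, A, B) be a strategy for a symmetric non-local game G = (X, ν, A, D), let ν_A be the marginal of ν on the first coordinate, and let ρ_A, ρ_B be the reduced density matrices of ψ on H_A, H_B. Let {Â^x_a} be POVMs on H_A and {B̂^y_b} be POVMs on H_B, and set γ_A = E_{x∼ν_A} Σ_a Tr((A^x_a − Â^x_a)² ρ_A) and γ_B = E_{y∼ν_A} Σ_b Tr((B^y_b − B̂^y_b)² ρ_B). Then the correlations C of S and Ĉ of Ŝ = (ψ, Â, B̂) satisfy E_{(x,y)∼ν} Σ_{a,b} |C_{x,y,a,b} − Ĉ_{x,y,a,b}| ≤ 12·dsync(S; ν_A) + 4·√γ_A + 4·√γ_B. -/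

import Mathlib

open scoped BigOperators Kronecker ComplexOrder
open Matrix

noncomputable section

abbrev Op (n : ℕ) := Matrix (Fin n) (Fin n) ℂ

def inn {I : Type*} [Fintype I] (v w : I → ℂ) : ℂ := ∑ i, star (v i) * w i

def nrm {I : Type*} [Fintype I] (v : I → ℂ) : ℝ := Real.sqrt (inn v v).re

def IsPOVM {n m : ℕ} (A : Fin m → Op n) : Prop :=
  (∀ a, (A a).PosSemidef) ∧ (∑ a, A a) = 1

def IsPVM {n m : ℕ} (A : Fin m → Op n) : Prop :=
  (∀ a, (A a).IsHermitian ∧ A a * A a = A a) ∧ (∑ a, A a) = 1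

structure Game (q m : ℕ) where
  nu : Fin q → Fin q → ℝ
  nu_nonneg : ∀ x y, 0 ≤ nu x y
  nu_sum : (∑ x, ∑ y, nu x y) = 1
  D : Fin m → Fin m → Fin q → Fin q → Bool

structure Strategy (q m nA nB : ℕ) where
  psi : Fin nA × Fin nB → ℂ
  psi_unit : inn psi psi = 1
  A : Fin q → Fin m → Op nA
  B : Fin q → Fin m → Op nB
  A_povm : ∀ x, IsPOVM (A x)
  B_povm : ∀ y, IsPOVM (B y)

def corrRaw {q m nA nB : ℕ} (psi : Fin nA × Fin nB → ℂ)
    (A : Fin q → Fin m → Op nA) (B : Fin q → Fin m → Op nB)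
    (x y : Fin q) (a b : Fin m) : ℂ :=
  inn psi ((A x a ⊗ₖ B y b).mulVec psi)

def Strategy.corr {q m nA nB : ℕ} (S : Strategy q m nA nB) :
    Fin q → Fin q → Fin m → Fin m → ℂ :=
  corrRaw S.psi S.A S.B

def winProbRaw {q m nA nB : ℕ} (G : Game q m) (psi : Fin nA × Fin nB → ℂ)
    (A : Fin q → Fin m → Op nA) (B : Fin q → Fin m → Op nB) : ℝ :=
  ∑ x, ∑ y, G.nu x y *
    ∑ a, ∑ b, (if G.D a b x y then (1:ℝ) else 0) * (corrRaw psi A B x y a b).re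

def winProb {q m nA nB : ℕ} (G : Game q m) (S : Strategy q m nA nB) : ℝ :=
  winProbRaw G S.psi S.A S.B

def qval {q m : ℕ} (G : Game q m) : ℝ :=
  sSup {w : ℝ | ∃ (nA nB : ℕ) (S : Strategy q m nA nB), winProb G S = w}

def margA {q : ℕ} (nu : Fin q → Fin q → ℝ) (x : Fin q) : ℝ := ∑ y, nu x y
def margB {q : ℕ} (nu : Fin q → Fin q → ℝ) (y : Fin q) : ℝ := ∑ x, nu x y

def dsyncRaw {q m nA nB : ℕ} (psi : Fin nA × Fin nB → ℂ)
    (A : Fin q → Fin m → Op nA) (B : Fin q → Fin m → Op nB) (mu : Fin q → ℝ) : ℝ :=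
  1 - ∑ x, mu x * ∑ a, (corrRaw psi A B x x a a).re

def Strategy.dsync {q m nA nB : ℕ} (S : Strategy q m nA nB) (mu : Fin q → ℝ) : ℝ :=
  dsyncRaw S.psi S.A S.B mu

def Game.Symm {q m : ℕ} (G : Game q m) : Prop :=
  (∀ x y, G.nu x y = G.nu y x) ∧ ∀ a b x y, G.D a b x y = G.D b a y x

def Game.Synchronous {q m : ℕ} (G : Game q m) : Prop :=
  G.Symm ∧ (∀ x, 0 < G.nu x x) ∧ ∀ x a b, a ≠ b → G.D a b x x = false

def Game.BetaSync {q m : ℕ} (G : Game q m) (β : ℝ) : Prop :=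
  G.Synchronous ∧ ∀ x, β * ∑ y, G.nu x y ≤ G.nu x x

def Game.Perfect {q m : ℕ} (G : Game q m) : Prop :=
  ∃ (nA nB : ℕ) (S : Strategy q m nA nB), winProb G S = 1

def IsPME {q m n : ℕ} (S : Strategy q m n n) : Prop :=
  (∀ x, IsPVM (S.A x)) ∧
  ∃ U : Op n, Uᴴ * U = 1 ∧
    (∀ p, S.psi p = ((Real.sqrt n)⁻¹ : ℂ) * ∑ i, U p.1 i * U p.2 i) ∧
    (∀ x a, S.B x a = U * (Uᴴ * S.A x a * U)ᵀ * Uᴴ)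

def dilTarget {nA nB kA kB : ℕ} (psi : Fin nA × Fin nB → ℂ)
    (aux : Fin kA × Fin kB → ℂ) :
    (Fin nA × Fin kA) × (Fin nB × Fin kB) → ℂ :=
  fun p => psi (p.1.1, p.2.1) * aux (p.1.2, p.2.2)

def DilIneqs {q m nA nB tA tB kA kB : ℕ}
    (S : Strategy q m nA nB) (T : Strategy q m tA tB)
    (VA : Matrix (Fin tA × Fin kA) (Fin nA) ℂ)
    (VB : Matrix (Fin tB × Fin kB) (Fin nB) ℂ)
    (aux : Fin kA × Fin kB → ℂ) (ε : ℝ) (mu : Fin q → Fin q → ℝ) : Prop :=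
  nrm (fun p => (VA ⊗ₖ VB).mulVec S.psi p - dilTarget T.psi aux p) ≤ ε ∧
  Real.sqrt (∑ x, margA mu x * ∑ a,
    (nrm (fun p => (VA ⊗ₖ VB).mulVec ((S.A x a ⊗ₖ (1 : Op nB)).mulVec S.psi) p
      - dilTarget ((T.A x a ⊗ₖ (1 : Op tB)).mulVec T.psi) aux p)) ^ 2) ≤ ε ∧
  Real.sqrt (∑ y, margB mu y * ∑ b,
    (nrm (fun p => (VA ⊗ₖ VB).mulVec (((1 : Op nA) ⊗ₖ S.B y b).mulVec S.psi) p
      - dilTarget (((1 : Op tA) ⊗ₖ T.B y b).mulVec T.psi) aux p)) ^ 2) ≤ ε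

def LocalDilation {q m nA nB tA tB : ℕ}
    (S : Strategy q m nA nB) (T : Strategy q m tA tB) (ε : ℝ)
    (mu : Fin q → Fin q → ℝ) : Prop :=
  ∃ (kA kB : ℕ) (VA : Matrix (Fin tA × Fin kA) (Fin nA) ℂ)
    (VB : Matrix (Fin tB × Fin kB) (Fin nB) ℂ) (aux : Fin kA × Fin kB → ℂ),
    VAᴴ * VA = 1 ∧ VBᴴ * VB = 1 ∧ inn aux aux = 1 ∧ DilIneqs S T VA VB aux ε mu

def SelfTestsPME {q m tA tB : ℕ} (G : Game q m) (T : Strategy q m tA tB)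
    (κ : ℝ → ℝ) (nuh : Fin q → Fin q → ℝ) : Prop :=
  ∀ ε : ℝ, 0 ≤ ε → ∀ (n : ℕ) (S : Strategy q m n n), IsPME S →
    qval G - ε ≤ winProb G S → LocalDilation S T (κ ε) nuh

def SelfTestsAll {q m tA tB : ℕ} (G : Game q m) (T : Strategy q m tA tB)
    (κ : ℝ → ℝ) (nuh : Fin q → Fin q → ℝ) : Prop :=
  ∀ ε : ℝ, 0 ≤ ε → ∀ (nA nB : ℕ) (S : Strategy q m nA nB),
    qval G - ε ≤ winProb G S → LocalDilation S T (κ ε) nuh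

def SelfTestsClass {q m tA tB : ℕ} (G : Game q m) (T : Strategy q m tA tB)
    (κ : ℝ → ℝ) (nuh : Fin q → Fin q → ℝ)
    (Cl : ∀ nA nB : ℕ, Strategy q m nA nB → Prop) : Prop :=
  ∀ ε : ℝ, 0 ≤ ε → ∀ (nA nB : ℕ) (S : Strategy q m nA nB), Cl nA nB S →
    qval G - ε ≤ winProb G S → LocalDilation S T (κ ε) nuh

def gamePoly {q m nA nB : ℕ} (G : Game q m) (S : Strategy q m nA nB) :
    Matrix (Fin nA × Fin nB) (Fin nA × Fin nB) ℂ :=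
  ∑ x, ∑ y, ∑ a, ∑ b,
    (((G.nu x y : ℝ) : ℂ) * (if G.D a b x y then 1 else 0)) • (S.A x a ⊗ₖ S.B y b)

def specGap {I : Type*} [Fintype I] [DecidableEq I] (M : Matrix I I ℂ) : ℝ :=
  if h : M.IsHermitian then
    (((Finset.univ.val.map h.eigenvalues).sort (· ≤ ·)).getD (Fintype.card I - 1) 0) -
    (((Finset.univ.val.map h.eigenvalues).sort (· ≤ ·)).getD (Fintype.card I - 2) 0)
  else 0

def rhoA {nA nB : ℕ} (psi : Fin nA × Fin nB → ℂ) : Op nA :=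
  Matrix.of fun i j => ∑ k, psi (i, k) * star (psi (j, k))

def rhoB {nA nB : ℕ} (psi : Fin nA × Fin nB → ℂ) : Op nB :=
  Matrix.of fun i j => ∑ k, psi (k, i) * star (psi (k, j))

def IsMaxEntG {I J : Type*} [Fintype I] [DecidableEq I] [Fintype J] (psi : I × J → ℂ) : Prop :=
  Fintype.card I = Fintype.card J ∧
  ∃ (e : I → I → ℂ) (f : I → J → ℂ),
    (∀ i j, inn (e i) (e j) = if i = j then 1 else 0) ∧
    (∀ i j, inn (f i) (f j) = if i = j then 1 else 0) ∧
    ∀ p, psi p = ((Real.sqrt (Fintype.card I))⁻¹ : ℂ) * ∑ i, e i p.1 * f i p.2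

def IsMaxEntIn {kA kB : ℕ} (v : Fin kA × Fin kB → ℂ) : Prop :=
  ∃ (d : ℕ), 0 < d ∧ ∃ (e : Fin d → Fin kA → ℂ) (f : Fin d → Fin kB → ℂ),
    (∀ i j, inn (e i) (e j) = if i = j then 1 else 0) ∧
    (∀ i j, inn (f i) (f j) = if i = j then 1 else 0) ∧
    ∀ p, v p = ((Real.sqrt d)⁻¹ : ℂ) * ∑ i, e i p.1 * f i p.2

def hsNorm {n : ℕ} (M : Op n) : ℝ := Real.sqrt (Mᴴ * M).trace.re

def traceNorm {n : ℕ} (M : Op n) : ℝ :=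
  ((Matrix.posSemidef_conjTranspose_mul_self M).1.eigenvectorUnitary.1 *
    diagonal (((↑) : ℝ → ℂ) ∘ ((Matrix.posSemidef_conjTranspose_mul_self M).1.eigenvalues · |>.sqrt)) *
    (star (Matrix.posSemidef_conjTranspose_mul_self M).1.eigenvectorUnitary : Op n)).trace.re

set_option linter.unusedSectionVars false

section SqrtPort
open scoped MatrixOrder

noncomputable def Matrix.PosSemidef.sqrt {n : Type*} [Fintype n] [DecidableEq n]
    {A : Matrix n n ℂ} (_hA : A.PosSemidef) : Matrix n n ℂ := CFC.sqrt A

lemma Matrix.PosSemidef.posSemidef_sqrt {n : Type*} [Fintype n] [DecidableEq n]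
    {A : Matrix n n ℂ} (hA : A.PosSemidef) : hA.sqrt.PosSemidef :=
  (CFC.sqrt_nonneg A).posSemidef

lemma Matrix.PosSemidef.sqrt_mul_self {n : Type*} [Fintype n] [DecidableEq n]
    {A : Matrix n n ℂ} (hA : A.PosSemidef) : hA.sqrt * hA.sqrt = A :=
  CFC.sqrt_mul_sqrt_self A hA.nonneg

end SqrtPort

namespace Stmt9Tools

variable {I J L : Type*} [Fintype I] [Fintype J] [Fintype L]

/-- squared Frobenius norm -/
def froSq (X : Matrix I J ℂ) : ℝ := ∑ i, ∑ j, Complex.normSq (X i j)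

lemma froSq_nonneg (X : Matrix I J ℂ) : 0 ≤ froSq X :=
  Finset.sum_nonneg fun _ _ => Finset.sum_nonneg fun _ _ => Complex.normSq_nonneg _

lemma froSq_conjTranspose (X : Matrix I J ℂ) : froSq Xᴴ = froSq X := by
  rw [froSq, froSq, Finset.sum_comm]
  simp [Matrix.conjTranspose_apply, Complex.normSq_conj]

lemma froSq_transpose (X : Matrix I J ℂ) : froSq Xᵀ = froSq X := by
  rw [froSq, froSq, Finset.sum_comm]
  simp [Matrix.transpose_apply]

lemma retrace_eq_froSq (X : Matrix I J ℂ) : ((Xᴴ * X).trace).re = froSq X := by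
  rw [Matrix.trace, froSq, Finset.sum_comm]
  rw [Complex.re_sum]
  refine Finset.sum_congr rfl fun j _ => ?_
  rw [Matrix.diag_apply, Matrix.mul_apply, Complex.re_sum]
  refine Finset.sum_congr rfl fun i _ => ?_
  simp [Matrix.conjTranspose_apply, Complex.normSq_apply, Complex.mul_re]

/-- Frobenius Cauchy-Schwarz for traces. -/
lemma abs_trace_mul_le (X : Matrix I J ℂ) (Y : Matrix J I ℂ) :
    ‖(X * Y).trace‖ ≤ Real.sqrt (froSq X) * Real.sqrt (froSq Y) := by
  have h1 : (X * Y).trace = ∑ p : I × J, X p.1 p.2 * Y p.2 p.1 := by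
    rw [Matrix.trace, Fintype.sum_prod_type]
    refine Finset.sum_congr rfl fun i _ => ?_
    rw [Matrix.diag_apply, Matrix.mul_apply]
  rw [h1]
  calc ‖∑ p : I × J, X p.1 p.2 * Y p.2 p.1‖
      ≤ ∑ p : I × J, ‖X p.1 p.2 * Y p.2 p.1‖ := by
        exact norm_sum_le _ _
    _ = ∑ p : I × J, ‖X p.1 p.2‖ * ‖Y p.2 p.1‖ := by
        simp [_root_.map_mul]
    _ ≤ Real.sqrt (∑ p : I × J, ‖X p.1 p.2‖ ^ 2) *
        Real.sqrt (∑ p : I × J, ‖Y p.2 p.1‖ ^ 2) :=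
        Real.sum_mul_le_sqrt_mul_sqrt _ _ _
    _ = Real.sqrt (froSq X) * Real.sqrt (froSq Y) := by
        congr 1
        · congr 1
          rw [froSq, Fintype.sum_prod_type]
          exact Finset.sum_congr rfl fun i _ => Finset.sum_congr rfl fun j _ => Complex.sq_norm _
        · congr 1
          rw [froSq, ← Fintype.sum_prod_type']
          rw [← Equiv.sum_comp (Equiv.prodComm I J)]
          refine Finset.sum_congr rfl fun p _ => ?_
          simp [Complex.sq_norm]

end Stmt9Tools

namespace Part2
open Stmt9Tools

variable {J L : Type*} [Fintype J] [Fintype L]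

lemma dot_re_eq (v : J → ℂ) : ((star v) ⬝ᵥ v).re = ∑ j, Complex.normSq (v j) := by
  rw [dotProduct, Complex.re_sum]
  refine Finset.sum_congr rfl fun j _ => ?_
  simp [Complex.normSq_apply, Complex.mul_re]

lemma dot_re_nonneg (v : J → ℂ) : 0 ≤ ((star v) ⬝ᵥ v).re := by
  rw [dot_re_eq]; exact Finset.sum_nonneg fun _ _ => Complex.normSq_nonneg _

lemma dot_cs (u v : J → ℂ) : ‖(star u) ⬝ᵥ v‖
    ≤ Real.sqrt (∑ j, Complex.normSq (u j)) * Real.sqrt (∑ j, Complex.normSq (v j)) := by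
  rw [dotProduct]
  calc ‖∑ j, star (u j) * v j‖ ≤ ∑ j, ‖star (u j) * v j‖ :=
        norm_sum_le _ _
    _ = ∑ j, ‖u j‖ * ‖v j‖ := by
        refine Finset.sum_congr rfl fun j _ => ?_
        rw [norm_mul]
        simp
    _ ≤ Real.sqrt (∑ j, ‖u j‖ ^ 2) * Real.sqrt (∑ j, ‖v j‖ ^ 2) :=
        Real.sum_mul_le_sqrt_mul_sqrt _ _ _
    _ = _ := by simp [Complex.sq_norm]

/-- contraction property of a square matrix -/
def Ctr (W : Matrix J J ℂ) : Prop :=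
  ∀ v : J → ℂ, (∑ j, Complex.normSq ((W *ᵥ v) j)) ≤ ∑ j, Complex.normSq (v j)

lemma Ctr.mul {W W' : Matrix J J ℂ} (h : Ctr W) (h' : Ctr W') : Ctr (W * W') := by
  intro v
  rw [← Matrix.mulVec_mulVec]
  exact le_trans (h _) (h' v)

section sq
variable {n : Type*} [Fintype n] [DecidableEq n]

lemma psd_quadform_re_nonneg {M : Matrix n n ℂ} (h : M.PosSemidef) (x : n → ℂ) :
    0 ≤ ((star x) ⬝ᵥ (M *ᵥ x)).re := by
  have := h.dotProduct_mulVec_nonneg x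
  rw [Complex.le_def] at this
  simpa using this.1

lemma retrace_nonneg {M : Matrix n n ℂ} (h : M.PosSemidef) : 0 ≤ (M.trace).re := by
  have h1 : h.sqrtᴴ * h.sqrt = M := by
    rw [h.posSemidef_sqrt.isHermitian.eq, h.sqrt_mul_self]
  calc (0:ℝ) ≤ froSq h.sqrt := froSq_nonneg _
    _ = ((h.sqrtᴴ * h.sqrt).trace).re := (retrace_eq_froSq _).symm
    _ = (M.trace).re := by rw [h1]

lemma psd_psd_trace_re_nonneg {X Y : Matrix n n ℂ} (hX : X.PosSemidef) (hY : Y.PosSemidef) :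
    0 ≤ ((X * Y).trace).re := by
  have h1 : X * Y = hX.sqrt * (hX.sqrt * Y) := by
    rw [← Matrix.mul_assoc, hX.sqrt_mul_self]
  have h2 : ((X * Y).trace) = ((hX.sqrtᴴ * Y * hX.sqrt).trace) := by
    rw [h1, Matrix.trace_mul_comm, hX.posSemidef_sqrt.isHermitian.eq, Matrix.mul_assoc]
  rw [h2]
  exact retrace_nonneg (hY.conjTranspose_mul_mul_same _)

lemma trace_mul_re_mono {S X Y : Matrix n n ℂ} (hS : S.PosSemidef)
    (hXY : (Y - X).PosSemidef) : ((S * X).trace).re ≤ ((S * Y).trace).re := by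
  have h := psd_psd_trace_re_nonneg hS hXY
  have h2 : S * (Y - X) = S * Y - S * X := by noncomm_ring
  rw [h2, Matrix.trace_sub, Complex.sub_re] at h
  linarith

lemma psd_sub_sq {R : Matrix n n ℂ} (hR : R.PosSemidef) (hR1 : (1 - R).PosSemidef) :
    (R - R * R).PosSemidef := by
  have h := hR1.conjTranspose_mul_mul_same (B := hR.sqrt)
  have hh : hR.sqrtᴴ = hR.sqrt := hR.posSemidef_sqrt.isHermitian.eq
  set s := hR.sqrt with hs
  have hss : s * s = R := hR.sqrt_mul_self
  have key : sᴴ * (1 - R) * s = R - R * R := by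
    rw [hh, ← hss]
    noncomm_ring
  rw [key] at h
  exact h

lemma psd_one_sub_sq {R : Matrix n n ℂ} (hR : R.PosSemidef) (hR1 : (1 - R).PosSemidef) :
    (1 - R * R).PosSemidef := by
  have : (1 : Matrix n n ℂ) - R * R = (1 - R) + (R - R * R) := by noncomm_ring
  rw [this]
  exact hR1.add (psd_sub_sq hR hR1)

lemma ctr_of_psd {R : Matrix n n ℂ} (hR : R.PosSemidef) (hR1 : (1 - R).PosSemidef) :
    Ctr R := by
  intro v
  have hq := psd_quadform_re_nonneg (psd_one_sub_sq hR hR1) v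
  have h1 : star (R *ᵥ v) ⬝ᵥ (R *ᵥ v) = star v ⬝ᵥ ((R * R) *ᵥ v) := by
    simp only [Matrix.star_mulVec, hR.isHermitian.eq, Matrix.dotProduct_mulVec,
      Matrix.vecMul_vecMul]
  have h2 : ((star v) ⬝ᵥ ((1 - R * R) *ᵥ v)).re
      = ((star v) ⬝ᵥ v).re - ((star v) ⬝ᵥ ((R * R) *ᵥ v)).re := by
    rw [Matrix.sub_mulVec, dotProduct_sub, Complex.sub_re, Matrix.one_mulVec]
  rw [h2] at hq
  have h3 := dot_re_eq (R *ᵥ v)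
  have h4 := dot_re_eq v
  rw [← h3, ← h4, h1]
  linarith

end sq


section povm
variable {n : Type*} [Fintype n] [DecidableEq n] {m : ℕ}

lemma dot_sum {ι : Type*} (s : Finset ι) (v : n → ℂ) (f : ι → n → ℂ) :
    v ⬝ᵥ (∑ b ∈ s, f b) = ∑ b ∈ s, v ⬝ᵥ f b := by
  simp only [dotProduct, Finset.sum_apply, Finset.mul_sum]
  rw [Finset.sum_comm]

lemma sum_mulVec' {ι : Type*} (s : Finset ι) (f : ι → Matrix n n ℂ) (v : n → ℂ) :
    (∑ b ∈ s, f b) *ᵥ v = ∑ b ∈ s, (f b) *ᵥ v := by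
  ext j
  simp only [Matrix.mulVec, dotProduct, Matrix.sum_apply, Finset.sum_apply,
    Finset.sum_mul]
  rw [Finset.sum_comm]

lemma psd_sum {ι : Type*} (s : Finset ι) (f : ι → Matrix n n ℂ)
    (hf : ∀ b ∈ s, (f b).PosSemidef) : (∑ b ∈ s, f b).PosSemidef := by
  refine Matrix.PosSemidef.of_dotProduct_mulVec_nonneg ?_ ?_
  · rw [Matrix.IsHermitian, Matrix.conjTranspose_sum]
    exact Finset.sum_congr rfl fun b hb => (hf b hb).1.eq
  · intro x
    rw [sum_mulVec', dot_sum]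
    exact Finset.sum_nonneg fun b hb => (hf b hb).dotProduct_mulVec_nonneg x

/-- each element of a POVM is ≤ 1 -/
lemma povm_le_one (Q : Fin m → Matrix n n ℂ) (hpsd : ∀ b, (Q b).PosSemidef)
    (hsum : (∑ b, Q b) = 1) (a : Fin m) : (1 - Q a).PosSemidef := by
  have h : (1 : Matrix n n ℂ) - Q a = ∑ b ∈ Finset.univ.erase a, Q b := by
    rw [← hsum, ← Finset.add_sum_erase _ _ (Finset.mem_univ a)]
    abel
  rw [h]
  exact psd_sum _ _ fun b _ => hpsd b

/-- cauchy-schwarz for a PSD quadratic form -/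
lemma psd_dot_cs {Q : Matrix n n ℂ} (hQ : Q.PosSemidef) (u v : n → ℂ) :
    ‖(star u) ⬝ᵥ (Q *ᵥ v)‖
      ≤ Real.sqrt (((star u) ⬝ᵥ (Q *ᵥ u)).re) * Real.sqrt (((star v) ⬝ᵥ (Q *ᵥ v)).re) := by
  set S := hQ.sqrt with hS
  have hSh : Sᴴ = S := hQ.posSemidef_sqrt.isHermitian.eq
  have key : ∀ w w' : n → ℂ, (star w) ⬝ᵥ (Q *ᵥ w') = star (S *ᵥ w) ⬝ᵥ (S *ᵥ w') := by
    intro w w'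
    rw [Matrix.star_mulVec, hSh, Matrix.dotProduct_mulVec (star w ᵥ* S),
      Matrix.vecMul_vecMul, hQ.sqrt_mul_self, Matrix.dotProduct_mulVec]
  rw [key u v]
  have hu : ((star u) ⬝ᵥ (Q *ᵥ u)).re = ∑ j, Complex.normSq ((S *ᵥ u) j) := by
    rw [key u u, dot_re_eq]
  have hv : ((star v) ⬝ᵥ (Q *ᵥ v)).re = ∑ j, Complex.normSq ((S *ᵥ v) j) := by
    rw [key v v, dot_re_eq]
  rw [hu, hv]
  exact dot_cs _ _

/-- a modulus-≤1 combination of a POVM is a contraction -/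
lemma ctr_povm (Q : Fin m → Matrix n n ℂ) (hpsd : ∀ b, (Q b).PosSemidef)
    (hsum : (∑ b, Q b) = 1) (c : Fin m → ℂ) (hc : ∀ b, ‖c b‖ ≤ 1) :
    Ctr (∑ b, c b • Q b) := by
  intro v
  set W := ∑ b, c b • Q b with hW
  set u := W *ᵥ v with hu
  have hWv : u = ∑ b, c b • ((Q b) *ᵥ v) := by
    rw [hu, hW, sum_mulVec']
    refine Finset.sum_congr rfl fun b _ => ?_
    ext j
    simp [Matrix.mulVec, dotProduct, Finset.mul_sum, mul_assoc]
  have key : (star u) ⬝ᵥ u = ∑ b, c b * ((star u) ⬝ᵥ ((Q b) *ᵥ v)) := by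
    calc (star u) ⬝ᵥ u = (star u) ⬝ᵥ (∑ b, c b • ((Q b) *ᵥ v)) := by
          exact congrArg _ hWv
      _ = ∑ b, (star u) ⬝ᵥ (c b • ((Q b) *ᵥ v)) := dot_sum _ _ _
      _ = ∑ b, c b * ((star u) ⬝ᵥ ((Q b) *ᵥ v)) := by
          refine Finset.sum_congr rfl fun b _ => ?_
          rw [dotProduct_smul, smul_eq_mul]
  have sumq : ∀ w : n → ℂ, (∑ b, ((star w) ⬝ᵥ ((Q b) *ᵥ w)).re) = ((star w) ⬝ᵥ w).re := by
    intro w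
    rw [← Complex.re_sum, ← dot_sum, ← sum_mulVec', hsum, Matrix.one_mulVec]
  have step1 : ((star u) ⬝ᵥ u).re ≤ ∑ b, ‖(star u) ⬝ᵥ ((Q b) *ᵥ v)‖ := by
    calc ((star u) ⬝ᵥ u).re ≤ ‖(star u) ⬝ᵥ u‖ := Complex.re_le_norm _
      _ = ‖∑ b, c b * ((star u) ⬝ᵥ ((Q b) *ᵥ v))‖ := by rw [key]
      _ ≤ ∑ b, ‖c b * ((star u) ⬝ᵥ ((Q b) *ᵥ v))‖ := norm_sum_le _ _
      _ ≤ ∑ b, ‖(star u) ⬝ᵥ ((Q b) *ᵥ v)‖ := by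
          refine Finset.sum_le_sum fun b _ => ?_
          rw [norm_mul]
          exact mul_le_of_le_one_left (norm_nonneg _) (hc b)
  have step2 : ∑ b, ‖(star u) ⬝ᵥ ((Q b) *ᵥ v)‖
      ≤ Real.sqrt (((star u) ⬝ᵥ u).re) * Real.sqrt (((star v) ⬝ᵥ v).re) := by
    calc ∑ b, ‖(star u) ⬝ᵥ ((Q b) *ᵥ v)‖
        ≤ ∑ b, Real.sqrt (((star u) ⬝ᵥ ((Q b) *ᵥ u)).re) *
            Real.sqrt (((star v) ⬝ᵥ ((Q b) *ᵥ v)).re) :=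
          Finset.sum_le_sum fun b _ => psd_dot_cs (hpsd b) u v
      _ ≤ Real.sqrt (∑ b, ((star u) ⬝ᵥ ((Q b) *ᵥ u)).re) *
            Real.sqrt (∑ b, ((star v) ⬝ᵥ ((Q b) *ᵥ v)).re) :=
          Real.sum_sqrt_mul_sqrt_le _ (fun b => psd_quadform_re_nonneg (hpsd b) u)
            (fun b => psd_quadform_re_nonneg (hpsd b) v)
      _ = Real.sqrt (((star u) ⬝ᵥ u).re) * Real.sqrt (((star v) ⬝ᵥ v).re) := by
          rw [sumq u, sumq v]
  have final : ((star u) ⬝ᵥ u).re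
      ≤ Real.sqrt (((star u) ⬝ᵥ u).re) * Real.sqrt (((star v) ⬝ᵥ v).re) :=
    le_trans step1 step2
  have hnn : 0 ≤ ((star u) ⬝ᵥ u).re := dot_re_nonneg u
  have hnnv : 0 ≤ ((star v) ⬝ᵥ v).re := dot_re_nonneg v
  rw [show (∑ j, Complex.normSq (u j)) = ((star u) ⬝ᵥ u).re from (dot_re_eq u).symm,
    ← dot_re_eq v]
  rcases eq_or_lt_of_le hnn with h0 | h0
  · linarith
  · have hs : 0 < Real.sqrt (((star u) ⬝ᵥ u).re) := Real.sqrt_pos.mpr h0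
    have hmul : Real.sqrt (((star u) ⬝ᵥ u).re) * Real.sqrt (((star u) ⬝ᵥ u).re)
        ≤ Real.sqrt (((star u) ⬝ᵥ u).re) * Real.sqrt (((star v) ⬝ᵥ v).re) := by
      rw [Real.mul_self_sqrt hnn]; exact final
    have hle : Real.sqrt (((star u) ⬝ᵥ u).re) ≤ Real.sqrt (((star v) ⬝ᵥ v).re) :=
      le_of_mul_le_mul_left hmul hs
    calc ((star u) ⬝ᵥ u).re
        = Real.sqrt (((star u) ⬝ᵥ u).re) * Real.sqrt (((star u) ⬝ᵥ u).re) :=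
          (Real.mul_self_sqrt hnn).symm
      _ ≤ Real.sqrt (((star v) ⬝ᵥ v).re) * Real.sqrt (((star v) ⬝ᵥ v).re) :=
          mul_le_mul hle hle (Real.sqrt_nonneg _) (Real.sqrt_nonneg _)
      _ = ((star v) ⬝ᵥ v).re := Real.mul_self_sqrt hnnv

end povm

section fromul
variable {J L : Type*} [Fintype J] [Fintype L]

lemma froSq_mul_le_left {Y : Matrix J J ℂ} (h : Ctr Y) (X : Matrix J L ℂ) :
    froSq (Y * X) ≤ froSq X := by
  rw [froSq, froSq, Finset.sum_comm, Finset.sum_comm (f := fun i j => Complex.normSq (X i j))]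
  refine Finset.sum_le_sum fun j _ => ?_
  have e : ∀ i, (Y * X) i j = (Y *ᵥ (fun k => X k j)) i := by
    intro i; simp [Matrix.mul_apply, Matrix.mulVec, dotProduct]
  calc (∑ i, Complex.normSq ((Y * X) i j)) = ∑ i, Complex.normSq ((Y *ᵥ (fun k => X k j)) i) := by
        exact Finset.sum_congr rfl fun i _ => by rw [e i]
    _ ≤ ∑ i, Complex.normSq (X i j) := h _

lemma froSq_mul_le_right {Y : Matrix J J ℂ} (h : Ctr Yᵀ) (X : Matrix L J ℂ) :
    froSq (X * Y) ≤ froSq X := by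
  rw [froSq, froSq]
  refine Finset.sum_le_sum fun i _ => ?_
  have e : ∀ j, (X * Y) i j = (Yᵀ *ᵥ (fun k => X i k)) j := by
    intro j
    simp [Matrix.mul_apply, Matrix.mulVec, dotProduct, Matrix.transpose_apply, mul_comm]
  calc (∑ j, Complex.normSq ((X * Y) i j)) = ∑ j, Complex.normSq ((Yᵀ *ᵥ (fun k => X i k)) j) :=
        Finset.sum_congr rfl fun j _ => by rw [e j]
    _ ≤ ∑ j, Complex.normSq (X i j) := h _

end fromul

section psdcontr
variable {n : Type*} [Fintype n] [DecidableEq n]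

lemma abs_trace_psd_contr {X W : Matrix n n ℂ} (hX : X.PosSemidef) (hW : Ctr Wᵀ) :
    ‖(X * W).trace‖ ≤ (X.trace).re := by
  have h1 : X * W = hX.sqrt * (hX.sqrt * W) := by
    rw [← Matrix.mul_assoc, hX.sqrt_mul_self]
  have h2 : ‖(X * W).trace‖
      ≤ Real.sqrt (froSq hX.sqrt) * Real.sqrt (froSq (hX.sqrt * W)) := by
    rw [h1]; exact abs_trace_mul_le _ _
  have h3 : froSq (hX.sqrt * W) ≤ froSq hX.sqrt := froSq_mul_le_right hW _
  have h4 : froSq hX.sqrt = (X.trace).re := by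
    rw [← retrace_eq_froSq, hX.posSemidef_sqrt.isHermitian.eq, hX.sqrt_mul_self]
  calc ‖(X * W).trace‖
      ≤ Real.sqrt (froSq hX.sqrt) * Real.sqrt (froSq (hX.sqrt * W)) := h2
    _ ≤ Real.sqrt (froSq hX.sqrt) * Real.sqrt (froSq hX.sqrt) :=
        mul_le_mul_of_nonneg_left (Real.sqrt_le_sqrt h3) (Real.sqrt_nonneg _)
    _ = froSq hX.sqrt := Real.mul_self_sqrt (froSq_nonneg _)
    _ = (X.trace).re := h4

end psdcontr

end Part2

section Core
open Stmt9Tools Part2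

set_option maxHeartbeats 1000000

variable {p q mm mm' : ℕ}

lemma abs_sub_le' (x y : ℂ) : ‖x - y‖ ≤ ‖x‖ + ‖y‖ := by
  have := norm_add_le x (-y)
  simpa [sub_eq_add_neg] using this

lemma core_per_a (K : Matrix (Fin p) (Fin q) ℂ)
    (F Fh : Matrix (Fin p) (Fin p) ℂ)
    (hFpsd : F.PosSemidef) (hFhpsd : Fh.PosSemidef)
    (R : Matrix (Fin q) (Fin q) ℂ) (hRpsd : R.PosSemidef) (hR1 : (1 - R).PosSemidef)
    (Q : Fin mm' → Matrix (Fin q) (Fin q) ℂ)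
    (hQpsd : ∀ b, (Q b).PosSemidef) (hQsum : (∑ b, Q b) = 1) :
    (∑ b, ‖(Kᴴ * (F - Fh) * K * Q b).trace‖)
      ≤ 3 * (Real.sqrt (froSq ((F - Fh) * K)) * Real.sqrt (froSq (K * R)))
        + (((F * (K * Kᴴ)).trace).re - ((F * (K * (R * Kᴴ))).trace).re)
        + (((Fh * (K * Kᴴ)).trace).re - ((Fh * (K * (R * Kᴴ))).trace).re) := by
  classical
  obtain ⟨M, hM⟩ : ∃ M, M = F - Fh := ⟨_, rfl⟩
  obtain ⟨H, hH⟩ : ∃ H, H = Kᴴ * M * K := ⟨_, rfl⟩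
  obtain ⟨Rb, hRb⟩ : ∃ Rb, Rb = 1 - R := ⟨_, rfl⟩
  have hMh : Mᴴ = M := by
    rw [hM, Matrix.conjTranspose_sub, hFpsd.1.eq, hFhpsd.1.eq]
  have hRh : Rᴴ = R := hRpsd.1.eq
  have hRbpsd : Rb.PosSemidef := by rw [hRb]; exact hR1
  have hRbh : Rbᴴ = Rb := hRbpsd.1.eq
  have hRb1 : (1 - Rb).PosSemidef := by
    have e : (1 : Matrix (Fin q) (Fin q) ℂ) - Rb = R := by rw [hRb]; noncomm_ring
    rw [e]; exact hRpsd
  -- phases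
  set z : Fin mm' → ℂ := fun b => (H * Q b).trace with hz
  set c : Fin mm' → ℂ := fun b => (starRingEnd ℂ) (z b) / ((‖z b‖ : ℝ) : ℂ) with hc
  have hcabs : ∀ b, ‖c b‖ ≤ 1 := by
    intro b
    by_cases h0 : z b = 0
    · simp [hc, h0]
    · have : ‖c b‖
          = ‖(starRingEnd ℂ) (z b)‖ / ‖((‖z b‖ : ℝ) : ℂ)‖ :=
        norm_div _ _
      rw [this, Complex.norm_conj, Complex.norm_real, Real.norm_eq_abs,
        abs_of_nonneg (norm_nonneg _), div_self ((norm_ne_zero_iff.mpr h0))]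
  have hcz : ∀ b, c b * z b = ((‖z b‖ : ℝ) : ℂ) := by
    intro b
    by_cases h0 : z b = 0
    · simp [hc, h0]
    · have habs : ((‖z b‖ : ℝ) : ℂ) ≠ 0 := by
        exact Complex.ofReal_ne_zero.mpr ((norm_ne_zero_iff.mpr h0))
      rw [hc]
      rw [div_mul_eq_mul_div, mul_comm ((starRingEnd ℂ) (z b)) (z b), Complex.mul_conj]
      rw [div_eq_iff habs]
      rw [← Complex.ofReal_mul]
      norm_cast
      rw [Complex.normSq_eq_norm_sq]
      ring
  set W : Matrix (Fin q) (Fin q) ℂ := ∑ b, c b • Q b with hW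
  have hCtrW : Ctr W := ctr_povm Q hQpsd hQsum c hcabs
  have hCtrWt : Ctr Wᵀ := by
    have e : Wᵀ = ∑ b, c b • (Q b)ᵀ := by
      rw [hW, Matrix.transpose_sum]
      exact Finset.sum_congr rfl fun b _ => Matrix.transpose_smul _ _
    rw [e]
    refine ctr_povm _ (fun b => (hQpsd b).transpose) ?_ c hcabs
    rw [← Matrix.transpose_sum, hQsum, Matrix.transpose_one]
  have hCtrR : Ctr R := ctr_of_psd hRpsd hR1
  have hCtrRt : Ctr Rᵀ := by
    refine ctr_of_psd hRpsd.transpose ?_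
    have e : (1 : Matrix (Fin q) (Fin q) ℂ) - Rᵀ = (1 - R)ᵀ := by
      rw [Matrix.transpose_sub, Matrix.transpose_one]
    rw [e]; exact hR1.transpose
  have hCtrRb : Ctr Rb := ctr_of_psd hRbpsd hRb1
  have hCtrRbt : Ctr Rbᵀ := by
    refine ctr_of_psd hRbpsd.transpose ?_
    have e : (1 : Matrix (Fin q) (Fin q) ℂ) - Rbᵀ = (1 - Rb)ᵀ := by
      rw [Matrix.transpose_sub, Matrix.transpose_one]
    rw [e]; exact hRb1.transpose
  -- the sum of absolute values is the real part of a single trace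
  have hsum1 : (∑ b, ‖z b‖) = ((H * W).trace).re := by
    have e1 : H * W = ∑ b, c b • (H * Q b) := by
      rw [hW, Matrix.mul_sum]
      exact Finset.sum_congr rfl fun b _ => (mul_smul_comm _ _ _)
    have e2 : (H * W).trace = ∑ b, c b * z b := by
      rw [e1, Matrix.trace_sum]
      refine Finset.sum_congr rfl fun b _ => ?_
      rw [Matrix.trace_smul, smul_eq_mul]
    have e3 : (∑ b, c b * z b) = ((∑ b, ‖z b‖ : ℝ) : ℂ) := by
      rw [Complex.ofReal_sum]
      exact Finset.sum_congr rfl fun b _ => hcz b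
    rw [e2, e3, Complex.ofReal_re]
  have hgoal : (∑ b, ‖(Kᴴ * (F - Fh) * K * Q b).trace‖) = ∑ b, ‖z b‖ := by
    have e : Kᴴ * (F - Fh) * K = H := by rw [hH, hM]
    refine Finset.sum_congr rfl fun b _ => ?_
    rw [e]
  rw [hgoal, hsum1]
  -- block decomposition
  have hdec : H * W = R*H*R*W + R*H*Rb*W + Rb*H*R*W + Rb*H*Rb*W := by
    rw [hRb]
    simp only [Matrix.sub_mul, Matrix.mul_sub, Matrix.one_mul, Matrix.mul_one, Matrix.mul_assoc]
    abel
  have habs : ((H * W).trace).re ≤ ‖(R*H*R*W).trace‖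
      + ‖(R*H*Rb*W).trace‖ + ‖(Rb*H*R*W).trace‖
      + ‖(Rb*H*Rb*W).trace‖ := by
    have h1 := norm_add_le ((R*H*R*W).trace + (R*H*Rb*W).trace + (Rb*H*R*W).trace)
      ((Rb*H*Rb*W).trace)
    have h2 := norm_add_le ((R*H*R*W).trace + (R*H*Rb*W).trace) ((Rb*H*R*W).trace)
    have h3 := norm_add_le ((R*H*R*W).trace) ((R*H*Rb*W).trace)
    have h0 : ((H * W).trace).re ≤ ‖(R*H*R*W).trace + (R*H*Rb*W).trace
        + (Rb*H*R*W).trace + (Rb*H*Rb*W).trace‖ := by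
      rw [← Matrix.trace_add, ← Matrix.trace_add, ← Matrix.trace_add, ← hdec]
      exact Complex.re_le_norm _
    linarith
  -- useful froSq facts
  have hfroKM : froSq (Kᴴ * M) = froSq (M * K) := by
    rw [← froSq_conjTranspose (Kᴴ * M), Matrix.conjTranspose_mul,
      Matrix.conjTranspose_conjTranspose, hMh]
  have hfroRK : froSq (R * Kᴴ) = froSq (K * R) := by
    rw [← froSq_conjTranspose (R * Kᴴ), Matrix.conjTranspose_mul,
      Matrix.conjTranspose_conjTranspose, hRh]
  -- Block 1
  have hB1 : ‖(R*H*R*W).trace‖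
      ≤ Real.sqrt (froSq (M * K)) * Real.sqrt (froSq (K * R)) := by
    have e : (R*H*R*W).trace = ((Kᴴ*M) * (K * (R * (W * R)))).trace := by
      rw [hH]
      simp only [Matrix.mul_assoc]
      rw [Matrix.trace_mul_comm]
      simp only [Matrix.mul_assoc]
    rw [e]
    calc ‖((Kᴴ*M) * (K * (R * (W * R)))).trace‖
        ≤ Real.sqrt (froSq (Kᴴ*M)) * Real.sqrt (froSq (K * (R * (W * R)))) :=
          abs_trace_mul_le _ _
      _ ≤ _ := by
          rw [hfroKM]
          refine mul_le_mul_of_nonneg_left (Real.sqrt_le_sqrt ?_) (Real.sqrt_nonneg _)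
          have e2 : K * (R * (W * R)) = (K * R) * (W * R) := by
            simp only [Matrix.mul_assoc]
          rw [e2]
          refine froSq_mul_le_right ?_ _
          rw [Matrix.transpose_mul]
          exact Ctr.mul hCtrRt hCtrWt
  -- Block 2
  have hB2 : ‖(R*H*Rb*W).trace‖
      ≤ Real.sqrt (froSq (M * K)) * Real.sqrt (froSq (K * R)) := by
    have e : (R*H*Rb*W).trace = ((M*K) * (Rb * (W * (R * Kᴴ)))).trace := by
      rw [hH]
      simp only [Matrix.mul_assoc]
      rw [Matrix.trace_mul_comm]
      simp only [Matrix.mul_assoc]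
      try rw [Matrix.trace_mul_comm]
      try simp only [Matrix.mul_assoc]
    rw [e]
    calc ‖((M*K) * (Rb * (W * (R * Kᴴ)))).trace‖
        ≤ Real.sqrt (froSq (M*K)) * Real.sqrt (froSq (Rb * (W * (R * Kᴴ)))) :=
          abs_trace_mul_le _ _
      _ ≤ _ := by
          refine mul_le_mul_of_nonneg_left (Real.sqrt_le_sqrt ?_) (Real.sqrt_nonneg _)
          calc froSq (Rb * (W * (R * Kᴴ))) ≤ froSq (W * (R * Kᴴ)) := froSq_mul_le_left hCtrRb _
            _ ≤ froSq (R * Kᴴ) := froSq_mul_le_left hCtrW _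
            _ = froSq (K * R) := hfroRK
  -- Block 3
  have hB3 : ‖(Rb*H*R*W).trace‖
      ≤ Real.sqrt (froSq (M * K)) * Real.sqrt (froSq (K * R)) := by
    have e : (Rb*H*R*W).trace = ((Kᴴ*M) * (K * (R * (W * Rb)))).trace := by
      rw [hH]
      simp only [Matrix.mul_assoc]
      rw [Matrix.trace_mul_comm]
      simp only [Matrix.mul_assoc]
    rw [e]
    calc ‖((Kᴴ*M) * (K * (R * (W * Rb)))).trace‖
        ≤ Real.sqrt (froSq (Kᴴ*M)) * Real.sqrt (froSq (K * (R * (W * Rb)))) :=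
          abs_trace_mul_le _ _
      _ ≤ _ := by
          rw [hfroKM]
          refine mul_le_mul_of_nonneg_left (Real.sqrt_le_sqrt ?_) (Real.sqrt_nonneg _)
          have e2 : K * (R * (W * Rb)) = (K * R) * (W * Rb) := by
            simp only [Matrix.mul_assoc]
          rw [e2]
          refine froSq_mul_le_right ?_ _
          rw [Matrix.transpose_mul]
          exact Ctr.mul hCtrRbt hCtrWt
  -- Block 4
  have hB4 : ‖(Rb*H*Rb*W).trace‖
      ≤ (((F * (K * Kᴴ)).trace).re - ((F * (K * (R * Kᴴ))).trace).re)
        + (((Fh * (K * Kᴴ)).trace).re - ((Fh * (K * (R * Kᴴ))).trace).re) := by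
    have key : ∀ (P : Matrix (Fin p) (Fin p) ℂ), P.PosSemidef →
        ‖(Rb * (Kᴴ * P * K) * Rb * W).trace‖
          ≤ ((P * (K * Kᴴ)).trace).re - ((P * (K * (R * Kᴴ))).trace).re := by
      intro P hP
      have hXP : Rb * (Kᴴ * P * K) * Rb = (hP.sqrt * K * Rb)ᴴ * (hP.sqrt * K * Rb) := by
        simp only [Matrix.conjTranspose_mul, Matrix.conjTranspose_conjTranspose, hRbh,
          hP.posSemidef_sqrt.isHermitian.eq]
        simp only [Matrix.mul_assoc]
        rw [← Matrix.mul_assoc hP.sqrt hP.sqrt, hP.sqrt_mul_self]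
        try simp only [Matrix.mul_assoc]
      have hXpsd : (Rb * (Kᴴ * P * K) * Rb).PosSemidef := by
        rw [hXP]; exact Matrix.posSemidef_conjTranspose_mul_self _
      have h1 : ‖(Rb * (Kᴴ * P * K) * Rb * W).trace‖
          ≤ ((Rb * (Kᴴ * P * K) * Rb).trace).re :=
        abs_trace_psd_contr hXpsd hCtrWt
      have h2 : ((Rb * (Kᴴ * P * K) * Rb).trace).re
          = ((P * (K * (Rb * (Rb * Kᴴ)))).trace).re := by
        congr 1
        simp only [Matrix.mul_assoc]
        rw [Matrix.trace_mul_comm]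
        simp only [Matrix.mul_assoc]
        rw [Matrix.trace_mul_comm]
        simp only [Matrix.mul_assoc]
      have h3 : ((P * (K * (Rb * (Rb * Kᴴ)))).trace).re
          ≤ ((P * (K * (Rb * Kᴴ))).trace).re := by
        refine trace_mul_re_mono hP ?_
        have e : K * (Rb * Kᴴ) - K * (Rb * (Rb * Kᴴ)) = K * (Rb - Rb * Rb) * Kᴴ := by
          simp only [Matrix.mul_sub, Matrix.sub_mul, Matrix.mul_assoc]
        rw [e]
        exact (psd_sub_sq hRbpsd hRb1).mul_mul_conjTranspose_same K
      have h4 : ((P * (K * (Rb * Kᴴ))).trace).re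
          = ((P * (K * Kᴴ)).trace).re - ((P * (K * (R * Kᴴ))).trace).re := by
        have e : P * (K * (Rb * Kᴴ)) = P * (K * Kᴴ) - P * (K * (R * Kᴴ)) := by
          rw [hRb]
          simp only [Matrix.sub_mul, Matrix.mul_sub, Matrix.one_mul, Matrix.mul_assoc]
        rw [e, Matrix.trace_sub, Complex.sub_re]
      calc ‖(Rb * (Kᴴ * P * K) * Rb * W).trace‖
          ≤ ((Rb * (Kᴴ * P * K) * Rb).trace).re := h1
        _ = ((P * (K * (Rb * (Rb * Kᴴ)))).trace).re := h2
        _ ≤ ((P * (K * (Rb * Kᴴ))).trace).re := h3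
        _ = _ := h4
    have hsplit : Rb*H*Rb*W = (Rb * (Kᴴ * F * K) * Rb * W) - (Rb * (Kᴴ * Fh * K) * Rb * W) := by
      rw [hH, hM]
      simp only [Matrix.mul_sub, Matrix.sub_mul, Matrix.mul_assoc]
    calc ‖(Rb*H*Rb*W).trace‖
        = ‖(Rb * (Kᴴ * F * K) * Rb * W).trace
            - (Rb * (Kᴴ * Fh * K) * Rb * W).trace‖ := by
          rw [hsplit, Matrix.trace_sub]
      _ ≤ ‖(Rb * (Kᴴ * F * K) * Rb * W).trace‖
          + ‖(Rb * (Kᴴ * Fh * K) * Rb * W).trace‖ := abs_sub_le' _ _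
      _ ≤ _ := add_le_add (key F hFpsd) (key Fh hFhpsd)
  calc ((H * W).trace).re
      ≤ ‖(R*H*R*W).trace‖ + ‖(R*H*Rb*W).trace‖
        + ‖(Rb*H*R*W).trace‖ + ‖(Rb*H*Rb*W).trace‖ := habs
    _ ≤ (Real.sqrt (froSq (M * K)) * Real.sqrt (froSq (K * R)))
        + (Real.sqrt (froSq (M * K)) * Real.sqrt (froSq (K * R)))
        + (Real.sqrt (froSq (M * K)) * Real.sqrt (froSq (K * R)))
        + ((((F * (K * Kᴴ)).trace).re - ((F * (K * (R * Kᴴ))).trace).re)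
          + (((Fh * (K * Kᴴ)).trace).re - ((Fh * (K * (R * Kᴴ))).trace).re)) :=
        add_le_add (add_le_add (add_le_add hB1 hB2) hB3) hB4
    _ = _ := by rw [hM]; ring

end Core

section Core2
open Stmt9Tools Part2

set_option maxHeartbeats 1000000

variable {p q mm mm' : ℕ}

lemma core_sum (K : Matrix (Fin p) (Fin q) ℂ) (hK : ((Kᴴ * K).trace).re = 1)
    (F Fh : Fin mm → Matrix (Fin p) (Fin p) ℂ)
    (hFpsd : ∀ a, (F a).PosSemidef) (hFsum : (∑ a, F a) = 1)
    (hFhpsd : ∀ a, (Fh a).PosSemidef) (hFhsum : (∑ a, Fh a) = 1)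
    (G : Fin mm → Matrix (Fin q) (Fin q) ℂ)
    (hGpsd : ∀ a, (G a).PosSemidef) (hGsum : (∑ a, G a) = 1)
    (Q : Fin mm' → Matrix (Fin q) (Fin q) ℂ)
    (hQpsd : ∀ b, (Q b).PosSemidef) (hQsum : (∑ b, Q b) = 1) :
    (∑ a, ∑ b, ‖(Kᴴ * (F a - Fh a) * K * Q b).trace‖)
      ≤ 4 * Real.sqrt (∑ a, froSq ((F a - Fh a) * K))
        + 2 * (1 - ∑ a, ((F a * (K * (G a * Kᴴ))).trace).re) := by
  classical
  set g : Fin mm → ℝ := fun a => Real.sqrt (froSq ((F a - Fh a) * K)) with hgdef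
  set β : Fin mm → ℝ := fun a => Real.sqrt (froSq (K * G a)) with hβdef
  -- traces of POVM elements against K Kᴴ sum to one
  have hc1 : ∀ (P : Fin mm → Matrix (Fin p) (Fin p) ℂ), (∑ a, P a) = 1 →
      (∑ a, ((P a * (K * Kᴴ)).trace).re) = 1 := by
    intro P hsum
    rw [← Complex.re_sum, ← Matrix.trace_sum, ← Finset.sum_mul, hsum, Matrix.one_mul,
      Matrix.trace_mul_comm, hK]
  -- the cross term bound
  have hMh : ∀ a, (F a - Fh a)ᴴ = F a - Fh a := by
    intro a
    rw [Matrix.conjTranspose_sub, (hFpsd a).1.eq, (hFhpsd a).1.eq]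
  have hfroKM : ∀ a, froSq (Kᴴ * (F a - Fh a)) = froSq ((F a - Fh a) * K) := by
    intro a
    rw [← froSq_conjTranspose (Kᴴ * (F a - Fh a)), Matrix.conjTranspose_mul,
      Matrix.conjTranspose_conjTranspose, hMh a]
  have hcross : ∀ a, (((F a - Fh a) * (K * (G a * Kᴴ))).trace).re ≤ g a * β a := by
    intro a
    have e : ((Kᴴ * (F a - Fh a)) * (K * G a)).trace
        = ((F a - Fh a) * (K * (G a * Kᴴ))).trace := by
      simp only [Matrix.mul_assoc]
      rw [Matrix.trace_mul_comm]
      try simp only [Matrix.mul_assoc]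
    calc (((F a - Fh a) * (K * (G a * Kᴴ))).trace).re
        ≤ ‖(((F a - Fh a) * (K * (G a * Kᴴ)))).trace‖ := Complex.re_le_norm _
      _ = ‖((Kᴴ * (F a - Fh a)) * (K * G a)).trace‖ := by rw [e]
      _ ≤ Real.sqrt (froSq (Kᴴ * (F a - Fh a))) * Real.sqrt (froSq (K * G a)) :=
          abs_trace_mul_le _ _
      _ = g a * β a := by rw [hfroKM a]
  -- sum of β² is at most one
  have hβsum : (∑ a, froSq (K * G a)) ≤ 1 := by
    have h1 : ∀ a, froSq (K * G a) ≤ (((Kᴴ * K) * G a).trace).re := by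
      intro a
      have e : (((K * G a)ᴴ) * (K * G a)).trace = ((Kᴴ * K) * (G a * G a)).trace := by
        simp only [Matrix.conjTranspose_mul, (hGpsd a).1.eq, Matrix.mul_assoc]
        rw [Matrix.trace_mul_comm]
        try simp only [Matrix.mul_assoc]
      have h2 : froSq (K * G a) = (((Kᴴ * K) * (G a * G a)).trace).re := by
        rw [← retrace_eq_froSq, e]
      rw [h2]
      exact trace_mul_re_mono (Matrix.posSemidef_conjTranspose_mul_self K)
        (psd_sub_sq (hGpsd a) (povm_le_one G hGpsd hGsum a))
    calc (∑ a, froSq (K * G a)) ≤ ∑ a, (((Kᴴ * K) * G a).trace).re :=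
          Finset.sum_le_sum fun a _ => h1 a
      _ = 1 := by
          rw [← Complex.re_sum, ← Matrix.trace_sum, ← Matrix.mul_sum, hGsum, Matrix.mul_one, hK]
  have hgβ : (∑ a, g a * β a) ≤ Real.sqrt (∑ a, froSq ((F a - Fh a) * K)) := by
    calc (∑ a, g a * β a)
        ≤ Real.sqrt (∑ a, (g a) ^ 2) * Real.sqrt (∑ a, (β a) ^ 2) :=
          Real.sum_mul_le_sqrt_mul_sqrt _ _ _
      _ = Real.sqrt (∑ a, froSq ((F a - Fh a) * K)) * Real.sqrt (∑ a, froSq (K * G a)) := by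
          congr 1
          · congr 1
            exact Finset.sum_congr rfl fun a _ => Real.sq_sqrt (froSq_nonneg _)
          · congr 1
            exact Finset.sum_congr rfl fun a _ => Real.sq_sqrt (froSq_nonneg _)
      _ ≤ Real.sqrt (∑ a, froSq ((F a - Fh a) * K)) * 1 := by
          refine mul_le_mul_of_nonneg_left ?_ (Real.sqrt_nonneg _)
          calc Real.sqrt (∑ a, froSq (K * G a)) ≤ Real.sqrt 1 := Real.sqrt_le_sqrt hβsum
            _ = 1 := Real.sqrt_one
      _ = _ := mul_one _
  have hper : ∀ a, (∑ b, ‖(Kᴴ * (F a - Fh a) * K * Q b).trace‖)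
      ≤ 3 * (g a * β a)
        + (((F a * (K * Kᴴ)).trace).re - ((F a * (K * (G a * Kᴴ))).trace).re)
        + (((Fh a * (K * Kᴴ)).trace).re - ((Fh a * (K * (G a * Kᴴ))).trace).re) := fun a =>
    core_per_a K (F a) (Fh a) (hFpsd a) (hFhpsd a) (G a) (hGpsd a)
      (povm_le_one G hGpsd hGsum a) Q hQpsd hQsum
  have hA : (∑ a, ∑ b, ‖(Kᴴ * (F a - Fh a) * K * Q b).trace‖)
      ≤ ∑ a, (3 * (g a * β a)
        + (((F a * (K * Kᴴ)).trace).re - ((F a * (K * (G a * Kᴴ))).trace).re)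
        + (((Fh a * (K * Kᴴ)).trace).re - ((Fh a * (K * (G a * Kᴴ))).trace).re)) :=
    Finset.sum_le_sum fun a _ => hper a
  have hsplit : (∑ a, (3 * (g a * β a)
        + (((F a * (K * Kᴴ)).trace).re - ((F a * (K * (G a * Kᴴ))).trace).re)
        + (((Fh a * (K * Kᴴ)).trace).re - ((Fh a * (K * (G a * Kᴴ))).trace).re)))
      = 3 * (∑ a, g a * β a)
        + ((∑ a, ((F a * (K * Kᴴ)).trace).re) - (∑ a, ((F a * (K * (G a * Kᴴ))).trace).re))
        + ((∑ a, ((Fh a * (K * Kᴴ)).trace).re) - (∑ a, ((Fh a * (K * (G a * Kᴴ))).trace).re)) := by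
    rw [Finset.sum_add_distrib, Finset.sum_add_distrib, Finset.sum_sub_distrib,
      Finset.sum_sub_distrib, Finset.mul_sum]
  have hcrossS : (∑ a, ((F a * (K * (G a * Kᴴ))).trace).re)
      - (∑ a, ((Fh a * (K * (G a * Kᴴ))).trace).re) ≤ ∑ a, g a * β a := by
    rw [← Finset.sum_sub_distrib]
    refine Finset.sum_le_sum fun a _ => ?_
    have e : ((F a * (K * (G a * Kᴴ))).trace).re - ((Fh a * (K * (G a * Kᴴ))).trace).re
        = (((F a - Fh a) * (K * (G a * Kᴴ))).trace).re := by
      rw [Matrix.sub_mul, Matrix.trace_sub, Complex.sub_re]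
    rw [e]
    exact hcross a
  have h1F := hc1 F hFsum
  have h1Fh := hc1 Fh hFhsum
  have hgβ4 : 4 * (∑ a, g a * β a) ≤ 4 * Real.sqrt (∑ a, froSq ((F a - Fh a) * K)) := by
    linarith [hgβ]
  calc (∑ a, ∑ b, ‖(Kᴴ * (F a - Fh a) * K * Q b).trace‖)
      ≤ _ := hA
    _ = _ := hsplit
    _ ≤ 4 * Real.sqrt (∑ a, froSq ((F a - Fh a) * K))
        + 2 * (1 - ∑ a, ((F a * (K * (G a * Kᴴ))).trace).re) := by
      linarith [hcrossS, hgβ, h1F, h1Fh]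

end Core2

section Bridge
open Stmt9Tools Part2

set_option maxHeartbeats 1600000

variable {nA nB : ℕ}

/-- the matrix of a bipartite vector -/
def Km (psi : Fin nA × Fin nB → ℂ) : Matrix (Fin nA) (Fin nB) ℂ :=
  Matrix.of fun i j => psi (i, j)

lemma inn_kron (psi : Fin nA × Fin nB → ℂ) (X : Op nA) (Y : Op nB) :
    inn psi ((X ⊗ₖ Y).mulVec psi) = ((Km psi)ᴴ * X * (Km psi) * Yᵀ).trace := by
  classical
  have hL : inn psi ((X ⊗ₖ Y).mulVec psi)
      = ∑ i, ∑ j, ∑ k, ∑ l, star (psi (i, j)) * X i k * psi (k, l) * Y j l := by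
    simp only [inn, Matrix.mulVec, dotProduct, Matrix.kroneckerMap_apply,
      Finset.mul_sum, Fintype.sum_prod_type]
    refine Finset.sum_congr rfl fun i _ => Finset.sum_congr rfl fun j _ =>
      Finset.sum_congr rfl fun k _ => Finset.sum_congr rfl fun l _ => by ring
  have hR : ((Km psi)ᴴ * X * (Km psi) * Yᵀ).trace
      = ∑ j, ∑ l, ∑ k, ∑ i, star (psi (i, j)) * X i k * psi (k, l) * Y j l := by
    simp only [Matrix.trace, Matrix.diag_apply, Matrix.mul_apply, Matrix.conjTranspose_apply,
      Matrix.transpose_apply, Km, Matrix.of_apply, Finset.sum_mul]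
  rw [hL, hR]
  calc (∑ i, ∑ j, ∑ k, ∑ l, star (psi (i, j)) * X i k * psi (k, l) * Y j l)
      = ∑ j, ∑ i, ∑ k, ∑ l, star (psi (i, j)) * X i k * psi (k, l) * Y j l :=
        Finset.sum_comm
    _ = ∑ j, ∑ i, ∑ l, ∑ k, star (psi (i, j)) * X i k * psi (k, l) * Y j l := by
        refine Finset.sum_congr rfl fun j _ => Finset.sum_congr rfl fun i _ => ?_
        exact Finset.sum_comm
    _ = ∑ j, ∑ l, ∑ i, ∑ k, star (psi (i, j)) * X i k * psi (k, l) * Y j l := by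
        refine Finset.sum_congr rfl fun j _ => ?_
        exact Finset.sum_comm
    _ = ∑ j, ∑ l, ∑ k, ∑ i, star (psi (i, j)) * X i k * psi (k, l) * Y j l := by
        refine Finset.sum_congr rfl fun j _ => Finset.sum_congr rfl fun l _ => ?_
        exact Finset.sum_comm

lemma froSq_Km (psi : Fin nA × Fin nB → ℂ) (hpsi : inn psi psi = 1) :
    froSq (Km psi) = 1 := by
  have h : (inn psi psi).re = 1 := by rw [hpsi]; rfl
  rw [← h]
  simp only [inn, froSq, Km, Matrix.of_apply]
  rw [Complex.re_sum, Fintype.sum_prod_type]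
  refine Finset.sum_congr rfl fun i _ => Finset.sum_congr rfl fun j _ => ?_
  simp [Complex.normSq_apply, Complex.mul_re]

lemma rhoA_eq (psi : Fin nA × Fin nB → ℂ) : rhoA psi = Km psi * (Km psi)ᴴ := by
  ext i j
  simp [rhoA, Km, Matrix.mul_apply, Matrix.conjTranspose_apply]

lemma rhoB_eq (psi : Fin nA × Fin nB → ℂ) : rhoB psi = (Km psi)ᵀ * ((Km psi)ᵀ)ᴴ := by
  ext i j
  simp [rhoB, Km, Matrix.mul_apply, Matrix.conjTranspose_apply, Matrix.transpose_apply,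
    mul_comm]

lemma froSq_link {P Q : ℕ} (K : Matrix (Fin P) (Fin Q) ℂ) (M : Matrix (Fin P) (Fin P) ℂ)
    (hM : Mᴴ = M) : froSq (M * K) = ((M * M * (K * Kᴴ)).trace).re := by
  rw [← retrace_eq_froSq]
  congr 1
  rw [Matrix.conjTranspose_mul, hM]
  simp only [Matrix.mul_assoc]
  rw [Matrix.trace_mul_comm]
  try simp only [Matrix.mul_assoc]

lemma retrace_link {P Q : ℕ} (K : Matrix (Fin P) (Fin Q) ℂ)
    (A : Matrix (Fin P) (Fin P) ℂ) (B : Matrix (Fin Q) (Fin Q) ℂ) :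
    (Kᴴ * A * K * B).trace = (A * (K * (B * Kᴴ))).trace := by
  simp only [Matrix.mul_assoc]
  rw [Matrix.trace_mul_comm]
  try simp only [Matrix.mul_assoc]

lemma tct {P Q : ℕ} (K : Matrix (Fin P) (Fin Q) ℂ) : ((Kᵀ)ᴴ)ᵀ = Kᴴ := by
  ext i j
  simp [Matrix.conjTranspose_apply, Matrix.transpose_apply]

lemma swapBA {P Q : ℕ} (K : Matrix (Fin P) (Fin Q) ℂ)
    (N : Matrix (Fin Q) (Fin Q) ℂ) (Ah : Matrix (Fin P) (Fin P) ℂ) :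
    ((Kᵀ)ᴴ * N * Kᵀ * Ahᵀ).trace = (Kᴴ * Ah * K * Nᵀ).trace := by
  rw [← Matrix.trace_transpose ((Kᵀ)ᴴ * N * Kᵀ * Ahᵀ)]
  simp only [Matrix.transpose_mul, Matrix.transpose_transpose, tct]
  simp only [Matrix.mul_assoc]
  rw [Matrix.trace_mul_comm]
  simp only [Matrix.mul_assoc]
  try rw [Matrix.trace_mul_comm]
  try simp only [Matrix.mul_assoc]
  try rw [Matrix.trace_mul_comm]
  try simp only [Matrix.mul_assoc]

end Bridge

section MainProof
open Stmt9Tools Part2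

set_option maxHeartbeats 3200000

/-- weighted Cauchy-Schwarz for square roots -/
lemma wCS {q : ℕ} (w t : Fin q → ℝ) (hw : ∀ x, 0 ≤ w x) (ht : ∀ x, 0 ≤ t x)
    (hwsum : (∑ x, w x) = 1) :
    (∑ x, w x * Real.sqrt (t x)) ≤ Real.sqrt (∑ x, w x * t x) := by
  have e : ∀ x, w x * Real.sqrt (t x) = Real.sqrt (w x) * Real.sqrt (w x * t x) := by
    intro x
    rw [Real.sqrt_mul (hw x), ← mul_assoc, Real.mul_self_sqrt (hw x)]
  calc (∑ x, w x * Real.sqrt (t x)) = ∑ x, Real.sqrt (w x) * Real.sqrt (w x * t x) :=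
        Finset.sum_congr rfl fun x _ => e x
    _ ≤ Real.sqrt (∑ x, w x) * Real.sqrt (∑ x, w x * t x) :=
        Real.sum_sqrt_mul_sqrt_le _ (fun x => hw x) (fun x => mul_nonneg (hw x) (ht x))
    _ = Real.sqrt (∑ x, w x * t x) := by rw [hwsum, Real.sqrt_one, one_mul]

end MainProof

/-- replacing the measurement operators of a strategy by nearby
POVMs perturbs the correlation in a controlled way. -/
theorem stmt9 {q m nA nB : ℕ} (G : Game q m) (hsym : G.Symm)
    (S : Strategy q m nA nB)
    (Ah : Fin q → Fin m → Op nA) (Bh : Fin q → Fin m → Op nB)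
    (hAh : ∀ x, IsPOVM (Ah x)) (hBh : ∀ y, IsPOVM (Bh y))
    (gA gB : ℝ)
    (hgA : gA = ∑ x, margA G.nu x * ∑ a,
      (((S.A x a - Ah x a) * (S.A x a - Ah x a) * rhoA S.psi).trace).re)
    (hgB : gB = ∑ y, margA G.nu y * ∑ b,
      (((S.B y b - Bh y b) * (S.B y b - Bh y b) * rhoB S.psi).trace).re) :
    (∑ x, ∑ y, G.nu x y * ∑ a, ∑ b,
        ‖S.corr x y a b - corrRaw S.psi Ah Bh x y a b‖)
      ≤ 12 * S.dsync (margA G.nu) + 4 * Real.sqrt gA + 4 * Real.sqrt gB := by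
  classical
  open Stmt9Tools Part2 in
  obtain ⟨hνsym, _⟩ := hsym
  set K : Matrix (Fin nA) (Fin nB) ℂ := Km S.psi with hKdef
  have hψ := S.psi_unit
  have hK1 : ((Kᴴ * K).trace).re = 1 := by
    rw [retrace_eq_froSq]; exact froSq_Km _ hψ
  have hKT1 : (((Kᵀ)ᴴ * Kᵀ).trace).re = 1 := by
    rw [retrace_eq_froSq, froSq_transpose]; exact froSq_Km _ hψ
  -- basic correlation facts
  have hcorr : ∀ x y a b, S.corr x y a b = (Kᴴ * S.A x a * K * (S.B y b)ᵀ).trace :=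
    fun x y a b => inn_kron S.psi (S.A x a) (S.B y b)
  have hcnn : ∀ x a b, 0 ≤ (S.corr x x a b).re := by
    intro x a b
    rw [hcorr]
    exact psd_psd_trace_re_nonneg (((S.A_povm x).1 a).conjTranspose_mul_mul_same K)
      (((S.B_povm x).1 b).transpose)
  have hsum1x : ∀ x, (∑ a, ∑ b, (S.corr x x a b).re) = 1 := by
    intro x
    have e : ∀ a b, S.corr x x a b = ((Kᴴ * S.A x a * K) * (S.B x b)ᵀ).trace := fun a b =>
      hcorr x x a b
    calc (∑ a, ∑ b, (S.corr x x a b).re)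
        = ∑ a, ((Kᴴ * S.A x a * K).trace).re := by
          refine Finset.sum_congr rfl fun a _ => ?_
          rw [← Complex.re_sum]
          congr 1
          rw [show (∑ b, S.corr x x a b) = ∑ b, ((Kᴴ * S.A x a * K) * (S.B x b)ᵀ).trace from
            Finset.sum_congr rfl fun b _ => e a b]
          rw [← Matrix.trace_sum, ← Matrix.mul_sum, ← Matrix.transpose_sum, (S.B_povm x).2,
            Matrix.transpose_one, Matrix.mul_one]
      _ = 1 := by
          rw [← Complex.re_sum, ← Matrix.trace_sum]
          rw [show (∑ a, Kᴴ * S.A x a * K) = Kᴴ * K from ?_]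
          · exact hK1
          · rw [← Matrix.sum_mul, ← Matrix.mul_sum, (S.A_povm x).2, Matrix.mul_one]
  have hδnn : ∀ x, 0 ≤ 1 - ∑ a, (S.corr x x a a).re := by
    intro x
    have h2 : (∑ a, (S.corr x x a a).re) ≤ ∑ a, ∑ b, (S.corr x x a b).re :=
      Finset.sum_le_sum fun a _ =>
        Finset.single_le_sum (fun b _ => hcnn x a b) (Finset.mem_univ a)
    rw [hsum1x x] at h2
    linarith
  have hmargnn : ∀ x, 0 ≤ margA G.nu x := fun x =>
    Finset.sum_nonneg fun y _ => G.nu_nonneg x y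
  have hmargsum : (∑ x, margA G.nu x) = 1 := by
    simp only [margA]; exact G.nu_sum
  have hdsync : S.dsync (margA G.nu)
      = ∑ x, margA G.nu x * (1 - ∑ a, (S.corr x x a a).re) := by
    show dsyncRaw S.psi S.A S.B (margA G.nu) = _
    unfold dsyncRaw
    simp only [mul_sub, mul_one]
    rw [Finset.sum_sub_distrib, hmargsum]
    rfl
  have hdsnn : 0 ≤ S.dsync (margA G.nu) := by
    rw [hdsync]
    exact Finset.sum_nonneg fun x _ => mul_nonneg (hmargnn x) (hδnn x)
  -- A-side bound
  have hTA : ∀ x y, (∑ a, ∑ b, ‖(Kᴴ * (S.A x a - Ah x a) * K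
        * ((S.B y b)ᵀ)).trace‖)
      ≤ 4 * Real.sqrt (∑ a, froSq ((S.A x a - Ah x a) * K))
        + 2 * (1 - ∑ a, (S.corr x x a a).re) := by
    intro x y
    have h := core_sum K hK1 (S.A x) (Ah x) (S.A_povm x).1 (S.A_povm x).2
      (hAh x).1 (hAh x).2
      (fun a => (S.B x a)ᵀ) (fun a => ((S.B_povm x).1 a).transpose)
      (by rw [← Matrix.transpose_sum, (S.B_povm x).2, Matrix.transpose_one])
      (fun b => (S.B y b)ᵀ) (fun b => ((S.B_povm y).1 b).transpose)
      (by rw [← Matrix.transpose_sum, (S.B_povm y).2, Matrix.transpose_one])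
    have e : (∑ a, ((S.A x a * (K * ((S.B x a)ᵀ * Kᴴ))).trace).re)
        = ∑ a, (S.corr x x a a).re := by
      refine Finset.sum_congr rfl fun a _ => ?_
      rw [hcorr x x a a, retrace_link]
    rw [e] at h
    exact h
  -- B-side bound
  have hTB : ∀ x y, (∑ a, ∑ b, ‖(Kᴴ * Ah x a * K
        * ((S.B y b - Bh y b)ᵀ)).trace‖)
      ≤ 4 * Real.sqrt (∑ b, froSq ((S.B y b - Bh y b) * Kᵀ))
        + 2 * (1 - ∑ b, (S.corr y y b b).re) := by
    intro x y
    have h := core_sum (Kᵀ) hKT1 (S.B y) (Bh y) (S.B_povm y).1 (S.B_povm y).2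
      (hBh y).1 (hBh y).2
      (fun b => (S.A y b)ᵀ) (fun b => ((S.A_povm y).1 b).transpose)
      (by rw [← Matrix.transpose_sum, (S.A_povm y).2, Matrix.transpose_one])
      (fun a => (Ah x a)ᵀ) (fun a => (((hAh x).1) a).transpose)
      (by rw [← Matrix.transpose_sum, (hAh x).2, Matrix.transpose_one])
    have e1 : (∑ b, ∑ a, ‖((Kᵀ)ᴴ * (S.B y b - Bh y b) * Kᵀ
          * ((Ah x a)ᵀ)).trace‖)
        = ∑ a, ∑ b, ‖(Kᴴ * Ah x a * K * ((S.B y b - Bh y b)ᵀ)).trace‖ := by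
      rw [Finset.sum_comm]
      refine Finset.sum_congr rfl fun a _ => Finset.sum_congr rfl fun b _ => ?_
      rw [swapBA]
    have e2 : (∑ b, ((S.B y b * (Kᵀ * ((S.A y b)ᵀ * (Kᵀ)ᴴ))).trace).re)
        = ∑ b, (S.corr y y b b).re := by
      refine Finset.sum_congr rfl fun b _ => ?_
      rw [hcorr y y b b, ← swapBA K (S.B y b) (S.A y b), retrace_link]
    rw [e1, e2] at h
    exact h
  -- pointwise triangle inequality
  have hpoint : ∀ x y a b, ‖S.corr x y a b - corrRaw S.psi Ah Bh x y a b‖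
      ≤ ‖(Kᴴ * (S.A x a - Ah x a) * K * ((S.B y b)ᵀ)).trace‖
        + ‖(Kᴴ * Ah x a * K * ((S.B y b - Bh y b)ᵀ)).trace‖ := by
    intro x y a b
    have e0 : corrRaw S.psi Ah Bh x y a b = (Kᴴ * Ah x a * K * (Bh y b)ᵀ).trace :=
      inn_kron S.psi (Ah x a) (Bh y b)
    have emat : Kᴴ * S.A x a * K * (S.B y b)ᵀ - Kᴴ * Ah x a * K * (Bh y b)ᵀ
        = (Kᴴ * (S.A x a - Ah x a) * K * ((S.B y b)ᵀ))
          + (Kᴴ * Ah x a * K * ((S.B y b - Bh y b)ᵀ)) := by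
      simp only [Matrix.transpose_sub, Matrix.mul_sub, Matrix.sub_mul]
      abel
    calc ‖S.corr x y a b - corrRaw S.psi Ah Bh x y a b‖
        = ‖(Kᴴ * (S.A x a - Ah x a) * K * ((S.B y b)ᵀ)).trace
            + (Kᴴ * Ah x a * K * ((S.B y b - Bh y b)ᵀ)).trace‖ := by
          rw [hcorr x y a b, e0, ← Matrix.trace_sub, emat, Matrix.trace_add]
      _ ≤ _ := norm_add_le _ _
  -- gamma links
  have hγA : ∀ x, (∑ a, froSq ((S.A x a - Ah x a) * K))
      = ∑ a, (((S.A x a - Ah x a) * (S.A x a - Ah x a) * rhoA S.psi).trace).re := by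
    intro x
    refine Finset.sum_congr rfl fun a _ => ?_
    have hMh : (S.A x a - Ah x a)ᴴ = S.A x a - Ah x a := by
      rw [Matrix.conjTranspose_sub, ((S.A_povm x).1 a).1.eq, ((hAh x).1 a).1.eq]
    rw [froSq_link K _ hMh, rhoA_eq]
  have hγB : ∀ y, (∑ b, froSq ((S.B y b - Bh y b) * Kᵀ))
      = ∑ b, (((S.B y b - Bh y b) * (S.B y b - Bh y b) * rhoB S.psi).trace).re := by
    intro y
    refine Finset.sum_congr rfl fun b _ => ?_
    have hMh : (S.B y b - Bh y b)ᴴ = S.B y b - Bh y b := by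
      rw [Matrix.conjTranspose_sub, ((S.B_povm y).1 b).1.eq, ((hBh y).1 b).1.eq]
    rw [froSq_link (Kᵀ) _ hMh, rhoB_eq]
  have hγAnn : ∀ x, 0 ≤ ∑ a,
      (((S.A x a - Ah x a) * (S.A x a - Ah x a) * rhoA S.psi).trace).re := by
    intro x
    rw [← hγA x]
    exact Finset.sum_nonneg fun a _ => froSq_nonneg _
  have hγBnn : ∀ y, 0 ≤ ∑ b,
      (((S.B y b - Bh y b) * (S.B y b - Bh y b) * rhoB S.psi).trace).re := by
    intro y
    rw [← hγB y]
    exact Finset.sum_nonneg fun b _ => froSq_nonneg _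
  -- define the per-question bounds
  set CA : Fin q → ℝ := fun x => 4 * Real.sqrt (∑ a,
    (((S.A x a - Ah x a) * (S.A x a - Ah x a) * rhoA S.psi).trace).re)
    + 2 * (1 - ∑ a, (S.corr x x a a).re) with hCA
  set CB : Fin q → ℝ := fun y => 4 * Real.sqrt (∑ b,
    (((S.B y b - Bh y b) * (S.B y b - Bh y b) * rhoB S.psi).trace).re)
    + 2 * (1 - ∑ b, (S.corr y y b b).re) with hCB
  have hinner : ∀ x y, (∑ a, ∑ b,
      ‖S.corr x y a b - corrRaw S.psi Ah Bh x y a b‖) ≤ CA x + CB y := by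
    intro x y
    calc (∑ a, ∑ b, ‖S.corr x y a b - corrRaw S.psi Ah Bh x y a b‖)
        ≤ ∑ a, ∑ b, (‖(Kᴴ * (S.A x a - Ah x a) * K * ((S.B y b)ᵀ)).trace‖
            + ‖(Kᴴ * Ah x a * K * ((S.B y b - Bh y b)ᵀ)).trace‖) :=
          Finset.sum_le_sum fun a _ => Finset.sum_le_sum fun b _ => hpoint x y a b
      _ = (∑ a, ∑ b, ‖(Kᴴ * (S.A x a - Ah x a) * K * ((S.B y b)ᵀ)).trace‖)
          + (∑ a, ∑ b, ‖(Kᴴ * Ah x a * K * ((S.B y b - Bh y b)ᵀ)).trace‖) := by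
          rw [← Finset.sum_add_distrib]
          exact Finset.sum_congr rfl fun a _ => Finset.sum_add_distrib
      _ ≤ CA x + CB y := by
          have h1 := hTA x y
          have h2 := hTB x y
          rw [hγA x] at h1
          rw [hγB y] at h2
          rw [hCA, hCB]
          exact add_le_add h1 h2
  have hnu_nonneg := G.nu_nonneg
  calc (∑ x, ∑ y, G.nu x y * ∑ a, ∑ b,
        ‖S.corr x y a b - corrRaw S.psi Ah Bh x y a b‖)
      ≤ ∑ x, ∑ y, G.nu x y * (CA x + CB y) := by
        refine Finset.sum_le_sum fun x _ => Finset.sum_le_sum fun y _ => ?_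
        exact mul_le_mul_of_nonneg_left (hinner x y) (hnu_nonneg x y)
    _ = (∑ x, margA G.nu x * CA x) + (∑ y, margA G.nu y * CB y) := by
        simp only [mul_add]
        rw [show (∑ x, ∑ y, (G.nu x y * CA x + G.nu x y * CB y))
            = (∑ x, ∑ y, G.nu x y * CA x) + (∑ x, ∑ y, G.nu x y * CB y) from ?_]
        · congr 1
          · refine Finset.sum_congr rfl fun x _ => ?_
            rw [← Finset.sum_mul]
            rfl
          · rw [Finset.sum_comm]
            refine Finset.sum_congr rfl fun y _ => ?_
            rw [← Finset.sum_mul]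
            congr 1
            rw [show (∑ x, G.nu x y) = ∑ x, G.nu y x from
              Finset.sum_congr rfl fun x _ => hνsym x y]
            rfl
        · rw [← Finset.sum_add_distrib]
          exact Finset.sum_congr rfl fun x _ => Finset.sum_add_distrib
    _ ≤ (4 * Real.sqrt gA + 2 * S.dsync (margA G.nu))
        + (4 * Real.sqrt gB + 2 * S.dsync (margA G.nu)) := by
        have hA : (∑ x, margA G.nu x * CA x)
            ≤ 4 * Real.sqrt gA + 2 * S.dsync (margA G.nu) := by
          rw [hCA]
          simp only [mul_add]
          rw [Finset.sum_add_distrib]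
          have h1 : (∑ x, margA G.nu x * (4 * Real.sqrt (∑ a,
              (((S.A x a - Ah x a) * (S.A x a - Ah x a) * rhoA S.psi).trace).re)))
              ≤ 4 * Real.sqrt gA := by
            have e : ∀ x, margA G.nu x * (4 * Real.sqrt (∑ a,
                (((S.A x a - Ah x a) * (S.A x a - Ah x a) * rhoA S.psi).trace).re))
                = 4 * (margA G.nu x * Real.sqrt (∑ a,
                (((S.A x a - Ah x a) * (S.A x a - Ah x a) * rhoA S.psi).trace).re)) := by
              intro x; ring
            rw [Finset.sum_congr rfl fun x _ => e x, ← Finset.mul_sum]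
            have := wCS (margA G.nu) (fun x => ∑ a,
              (((S.A x a - Ah x a) * (S.A x a - Ah x a) * rhoA S.psi).trace).re)
              hmargnn hγAnn hmargsum
            rw [← hgA] at this
            linarith
          have h2 : (∑ x, margA G.nu x * (2 * (1 - ∑ a, (S.corr x x a a).re)))
              = 2 * S.dsync (margA G.nu) := by
            rw [hdsync, Finset.mul_sum]
            exact Finset.sum_congr rfl fun x _ => by ring
          linarith
        have hB : (∑ y, margA G.nu y * CB y)
            ≤ 4 * Real.sqrt gB + 2 * S.dsync (margA G.nu) := by
          rw [hCB]
          simp only [mul_add]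
          rw [Finset.sum_add_distrib]
          have h1 : (∑ y, margA G.nu y * (4 * Real.sqrt (∑ b,
              (((S.B y b - Bh y b) * (S.B y b - Bh y b) * rhoB S.psi).trace).re)))
              ≤ 4 * Real.sqrt gB := by
            have e : ∀ y, margA G.nu y * (4 * Real.sqrt (∑ b,
                (((S.B y b - Bh y b) * (S.B y b - Bh y b) * rhoB S.psi).trace).re))
                = 4 * (margA G.nu y * Real.sqrt (∑ b,
                (((S.B y b - Bh y b) * (S.B y b - Bh y b) * rhoB S.psi).trace).re)) := by
              intro y; ring
            rw [Finset.sum_congr rfl fun y _ => e y, ← Finset.mul_sum]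
            have := wCS (margA G.nu) (fun y => ∑ b,
              (((S.B y b - Bh y b) * (S.B y b - Bh y b) * rhoB S.psi).trace).re)
              hmargnn hγBnn hmargsum
            rw [← hgB] at this
            linarith
          have h2 : (∑ y, margA G.nu y * (2 * (1 - ∑ b, (S.corr y y b b).re)))
              = 2 * S.dsync (margA G.nu) := by
            rw [hdsync, Finset.mul_sum]
            exact Finset.sum_congr rfl fun y _ => by ring
          linarith
        exact add_le_add hA hB
    _ ≤ 12 * S.dsync (margA G.nu) + 4 * Real.sqrt gA + 4 * Real.sqrt gB := by
        linarith [hdsnn]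


end
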